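/- Let 3 ≤ a ≤ x, set n = x(a+2) (the case v = 2 of the Setup, with λ = (x, x, ax)), and assume gcd(a, n-1) = 1 (note gcd(x, n-1) = 1 holds automatically). For 0 ≤ i ≤ n-2 write i = (a+2)·r_i + p_i with 0 ≤ p_i < a+2 and set f(i) := a·r_i - (2x-1)·p_i. Then for every 1 ≤ i ≤ n-2: ⌊f(i)/(n-1)⌋ + ⌊f(n-1-i)/(n-1)⌋ = -2; equivalently, i ∈ F_s if and only if n-1-i ∈ F_{2-s}, where F_k := { i : k = -⌊f(i)/(n-1)⌋ }. -/
import Mathlib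


/-- Let `3 ≤ a ≤ x`, `n = x(a+2)` (the case `v = 2` of the Setup, with
`λ = (x, x, ax)`), and assume `gcd(a, n-1) = 1` (note `gcd(x, n-1) = 1` automatically).
For `0 ≤ i ≤ n-2` write `i = (a+2)·r_i + p_i` with `0 ≤ p_i < a+2` and set
`f(i) := a·r_i - (2x-1)·p_i`. Then for every `1 ≤ i ≤ n-2`:
`⌊f(i)/(n-1)⌋ + ⌊f(n-1-i)/(n-1)⌋ = -2`; equivalently `i ∈ F_s ↔ n-1-i ∈ F_{2-s}`,
where `F_k := {i : k = -⌊f(i)/(n-1)⌋}`. -/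
theorem stmt_17 (a x : ℤ) (ha : 3 ≤ a) (hax : a ≤ x)
    (n : ℤ) (hn : n = x * (a + 2)) (hcop : IsCoprime a (n - 1))
    (f : ℤ → ℤ) (hf : ∀ m : ℤ, f m = a * (m / (a + 2)) - (2 * x - 1) * (m % (a + 2)))
    (i : ℤ) (hi1 : 1 ≤ i) (hi2 : i ≤ n - 2) :
    f i / (n - 1) + f (n - 1 - i) / (n - 1) = -2 ∧
      ∀ s : ℤ, (s = -(f i / (n - 1)) ↔ 2 - s = -(f (n - 1 - i) / (n - 1))) := by
  have hx3 : (3:ℤ) ≤ x := le_trans ha hax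
  have ha2 : (0:ℤ) < a + 2 := by linarith
  have hN : (0:ℤ) < n - 1 := by nlinarith
  set p := i % (a + 2) with hp
  set r := i / (a + 2) with hr
  have hpa : 0 ≤ p := Int.emod_nonneg i (by linarith)
  have hpb : p < a + 2 := Int.emod_lt_of_pos i ha2
  have hi : (a + 2) * r + p = i := Int.mul_ediv_add_emod i (a + 2)
  have hq2 : (n - 1 - i) / (a + 2) = x - 1 - r ∧ (n - 1 - i) % (a + 2) = a + 1 - p := by
    rw [Int.ediv_emod_unique ha2]
    refine ⟨by linear_combination -hn - hi, by linarith, by linarith⟩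
  -- sum formula
  have hsum : f i + f (n - 1 - i) = -(n - 1) := by
    rw [hf i, hf (n - 1 - i), hq2.1, hq2.2, ← hp, ← hr]
    linear_combination hn
  -- non-divisibility
  have hndvd : ¬ (n - 1) ∣ f i := by
    intro hdvd
    have h1 : (n - 1) ∣ a * i := by
      have key : a * i = (a + 2) * f i + 2 * (n - 1) * p := by
        rw [hf i, ← hp, ← hr]
        linear_combination a * hi.symm - 2 * p * hn
      rw [key]
      exact dvd_add (hdvd.mul_left (a + 2)) ⟨2 * p, by ring⟩
    have h2 : (n - 1) ∣ i := hcop.symm.dvd_of_dvd_mul_left h1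
    have := Int.le_of_dvd (by linarith) h2
    linarith
  set q := f i / (n - 1) with hq
  set s := f i % (n - 1) with hs
  have hs0 : 0 ≤ s := Int.emod_nonneg _ (by linarith)
  have hs1 : s < n - 1 := Int.emod_lt_of_pos _ hN
  have hsne : s ≠ 0 := by
    intro h0
    exact hndvd (Int.dvd_iff_emod_eq_zero.mpr (by rw [← hs, h0]))
  have hfi : (n - 1) * q + s = f i := Int.mul_ediv_add_emod _ _
  have heq : f (n - 1 - i) = ((n - 1) - s) + (-(q + 2)) * (n - 1) := by
    linear_combination hsum + hfi
  have hdiv2 : f (n - 1 - i) / (n - 1) = -(q + 2) := by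
    rw [heq, Int.add_mul_ediv_right _ _ (by linarith : n - 1 ≠ 0),
      Int.ediv_eq_zero_of_lt (by linarith) (by omega)]
    ring
  constructor
  · rw [hdiv2]; ring
  · intro t
    rw [hdiv2]
    constructor <;> intro h <;> omega
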